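/- arXiv:2102.04045 — 3 statements merged into one kernel-verified Lean document; each statement's English description precedes it below -/
import Mathlib

section
/- Let X be a set and let η : F(X) → D be the Baumslag rationalization of the free group F(X) on X. Let n : X → ℕ assign to each x ∈ X a positive integer n_x ≥ 1. Then the unique group homomorphism Ψ : D → D satisfying Ψ(η(x)) = η(x)^{n_x} for all x ∈ X (which exists by the universal property of D, since D is uniquely divisible) is an automorphism of D, i.e. Ψ is bijective. -/
/-- A group `D` is uniquely divisible if for every nonzero integer `n`
the `n`-th power map is a bijection. -/
def UniquelyDivisible (D : Type*) [Group D] : Prop :=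
  ∀ n : ℤ, n ≠ 0 → Function.Bijective (fun g : D => g ^ n)

/-- `η : G →* D` is a Baumslag rationalization of `G` if `D` is uniquely divisible
and every homomorphism from `G` to a uniquely divisible group factors uniquely
through `η`. -/
def IsBaumslagRationalization {G D : Type*} [Group G] [Group D] (η : G →* D) : Prop :=
  UniquelyDivisible D ∧
    ∀ (Q : Type) (_ : Group Q), UniquelyDivisible Q →
      ∀ f : G →* Q, ∃! h : D →* Q, h.comp η = f

/-- Let `η : F(X) → D` be the Baumslag rationalization of the free group on `X`
and let `n` assign to each `x ∈ X` a positive integer. Then the (unique)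
endomorphism `Ψ` of `D` with `Ψ(η(x)) = η(x) ^ n x` for all `x ∈ X` is an
automorphism, i.e. bijective. -/
theorem power_endomorphism_of_free_Q_group_is_automorphism
    {X : Type} {D : Type} [Group D]
    (η : FreeGroup X →* D) (hη : IsBaumslagRationalization η)
    (n : X → ℕ) (hn : ∀ x, 1 ≤ n x)
    (Ψ : D →* D) (hΨ : ∀ x : X, Ψ (η (FreeGroup.of x)) = η (FreeGroup.of x) ^ n x) :
    Function.Bijective Ψ := by
  obtain ⟨hD, huniv⟩ := hη
  have hnz : ∀ x : X, (n x : ℤ) ≠ 0 := fun x => by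
    have := hn x; omega
  -- choose roots
  have hroot : ∀ x : X, ∃ r : D, r ^ (n x : ℤ) = η (FreeGroup.of x) := fun x =>
    (hD (n x) (hnz x)).2 (η (FreeGroup.of x))
  choose r hr using hroot
  -- homomorphism from the free group sending x to the root
  set φ0 : FreeGroup X →* D := FreeGroup.lift r with hφ0
  obtain ⟨Φ, hΦ, -⟩ := huniv D ‹Group D› hD φ0
  have hΦx : ∀ x : X, Φ (η (FreeGroup.of x)) = r x := fun x => by
    have := congrArg (fun f : FreeGroup X →* D => f (FreeGroup.of x)) hΦ
    simpa [hφ0] using this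
  -- uniqueness of endomorphisms fixing η
  obtain ⟨e, -, he⟩ := huniv D ‹Group D› hD η
  have hid : (MonoidHom.id D) = e := he _ (by ext g; simp)
  -- Ψ ∘ Φ = id
  have h1 : Ψ.comp Φ = MonoidHom.id D := by
    rw [hid]
    apply he
    ext x
    have key : Ψ (r x) = η (FreeGroup.of x) := by
      apply (hD (n x) (hnz x)).1
      show Ψ (r x) ^ (n x : ℤ) = η (FreeGroup.of x) ^ (n x : ℤ)
      rw [← map_zpow, hr, hΨ, zpow_natCast]
    simp [hΦx, key]
  -- Φ ∘ Ψ = id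
  have h2 : Φ.comp Ψ = MonoidHom.id D := by
    rw [hid]
    apply he
    ext x
    have : Φ (η (FreeGroup.of x) ^ n x) = η (FreeGroup.of x) := by
      rw [map_pow, hΦx, ← zpow_natCast, hr]
    simp [hΨ, this]
  have hL : Function.LeftInverse Φ Ψ := fun d =>
    congrArg (fun f : D →* D => f d) h2
  have hR : Function.RightInverse Φ Ψ := fun d =>
    congrArg (fun f : D →* D => f d) h1
  exact ⟨hL.injective, hR.surjective⟩
end

section
/- (Radin–Sadun) Let p and q be odd positive integers. In the special orthogonal group SO(3) of 3×3 real matrices, let R_x be the rotation by angle 2π/p about the x-axis, i.e. the matrix with rows (1,0,0), (0, cos(2π/p), −sin(2π/p)), (0, sin(2π/p), cos(2π/p)), and let R_z be the rotation by angle 2π/q about the z-axis, i.e. the matrix with rows (cos(2π/q), −sin(2π/q), 0), (sin(2π/q), cos(2π/q), 0), (0,0,1). Then the subgroup G(p,q) = ⟨R_x, R_z⟩ of SO(3) is isomorphic to the free product ℤ/p * ℤ/q; equivalently, the group homomorphism from the free product (ℤ/p) * (ℤ/q) to SO(3) sending the generator of ℤ/p to R_x and the generator of ℤ/q to R_z is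 injective. -/
open Real Pointwise

/-- `SO3` is the special orthogonal group of `3 × 3` real matrices: the subgroup of the
orthogonal group (matrices `A` with `AᵀA = 1`) consisting of matrices of determinant `1`. -/
def SO3 : Subgroup (Matrix.orthogonalGroup (Fin 3) ℝ) where
  carrier := {A | Matrix.det (A : Matrix (Fin 3) (Fin 3) ℝ) = 1}
  one_mem' := by simp
  mul_mem' := by
    intro a b ha hb
    simp only [Set.mem_setOf_eq] at *
    rw [Matrix.UnitaryGroup.mul_val, Matrix.det_mul, ha, hb, mul_one]
  inv_mem' := by
    intro a ha
    simp only [Set.mem_setOf_eq] at *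
    rw [Matrix.UnitaryGroup.inv_val, Matrix.star_eq_conjTranspose, Matrix.det_conjTranspose,
      ha, star_one]

/-! ### Auxiliary material for the Radin–Sadun theorem -/

set_option synthInstance.maxHeartbeats 1000000

noncomputable section RSaux

/-- A primitive `n`-th root of unity. -/
noncomputable def RSzeta (n : ℕ) : ℂ := Complex.exp (2 * π * Complex.I / n)

/-- Membership in a (prime) ideal of a subring of `ℂ`, as a predicate on `ℂ`. -/
def RSMemI (O : Subring ℂ) (P : Ideal O) (c : ℂ) : Prop := ∃ h : c ∈ O, (⟨c, h⟩ : O) ∈ P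

/-- Being a "unit" at the ideal: in the subring but not in the ideal. -/
def RSMemU (O : Subring ℂ) (P : Ideal O) (c : ℂ) : Prop := c ∈ O ∧ ¬ RSMemI O P c

variable {O : Subring ℂ} {P : Ideal O}

theorem RSMemI.memO {c : ℂ} (h : RSMemI O P c) : c ∈ O := h.1

theorem RSMemI.add {a b : ℂ} (ha : RSMemI O P a) (hb : RSMemI O P b) :
    RSMemI O P (a + b) := by
  obtain ⟨ha1, ha2⟩ := ha; obtain ⟨hb1, hb2⟩ := hb
  refine ⟨add_mem ha1 hb1, ?_⟩
  have : (⟨a + b, add_mem ha1 hb1⟩ : O) = ⟨a, ha1⟩ + ⟨b, hb1⟩ := rfl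
  rw [this]; exact P.add_mem ha2 hb2

theorem RSMemI.neg {a : ℂ} (ha : RSMemI O P a) : RSMemI O P (-a) := by
  obtain ⟨ha1, ha2⟩ := ha
  refine ⟨neg_mem ha1, ?_⟩
  have : (⟨-a, neg_mem ha1⟩ : O) = -⟨a, ha1⟩ := rfl
  rw [this]; exact P.neg_mem ha2

theorem RSMemI.mul_left {a : ℂ} (b : ℂ) (hb : b ∈ O) (ha : RSMemI O P a) :
    RSMemI O P (b * a) := by
  obtain ⟨ha1, ha2⟩ := ha
  refine ⟨mul_mem hb ha1, ?_⟩
  have : (⟨b * a, mul_mem hb ha1⟩ : O) = ⟨b, hb⟩ * ⟨a, ha1⟩ := rfl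
  rw [this]; exact Ideal.mul_mem_left _ _ ha2

theorem RSMemI.mul_right {a : ℂ} (b : ℂ) (hb : b ∈ O) (ha : RSMemI O P a) :
    RSMemI O P (a * b) := by
  rw [mul_comm]; exact ha.mul_left b hb

theorem RSMemI_zero : RSMemI O P (0 : ℂ) := by
  refine ⟨zero_mem _, ?_⟩
  have : (⟨(0 : ℂ), zero_mem _⟩ : O) = 0 := rfl
  rw [this]; exact P.zero_mem

theorem RSMemU.memO {c : ℂ} (h : RSMemU O P c) : c ∈ O := h.1

theorem RSMemU.not_memI {c : ℂ} (h : RSMemU O P c) : ¬ RSMemI O P c := h.2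

theorem RSMemU.neg {a : ℂ} (ha : RSMemU O P a) : RSMemU O P (-a) := by
  refine ⟨neg_mem ha.1, fun hm => ha.2 ?_⟩
  have := hm.neg
  rwa [neg_neg] at this

theorem RSMemU.mul (hP : P.IsPrime) {a b : ℂ} (ha : RSMemU O P a) (hb : RSMemU O P b) :
    RSMemU O P (a * b) := by
  refine ⟨mul_mem ha.1 hb.1, fun hm => ?_⟩
  obtain ⟨h1, h2⟩ := hm
  have : (⟨a * b, h1⟩ : O) = ⟨a, ha.1⟩ * ⟨b, hb.1⟩ := rfl
  rw [this] at h2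
  rcases hP.mem_or_mem h2 with h | h
  · exact ha.2 ⟨ha.1, h⟩
  · exact hb.2 ⟨hb.1, h⟩

theorem RSMemU.add_memI {a b : ℂ} (ha : RSMemU O P a) (hb : RSMemI O P b) :
    RSMemU O P (a + b) := by
  refine ⟨add_mem ha.1 hb.memO, fun hm => ?_⟩
  have : RSMemI O P ((a + b) + (-b)) := hm.add hb.neg
  simp only [add_neg_cancel_right] at this
  exact ha.2 this

theorem RSMemU.sub_memI {a b : ℂ} (ha : RSMemU O P a) (hb : RSMemI O P b) :
    RSMemU O P (a - b) := by
  have := ha.add_memI hb.neg; rwa [← sub_eq_add_neg] at this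

theorem RSMemU_one (hP : P.IsPrime) : RSMemU O P (1 : ℂ) := by
  refine ⟨one_mem _, fun hm => ?_⟩
  obtain ⟨h1, h2⟩ := hm
  have : (⟨(1 : ℂ), h1⟩ : O) = 1 := rfl
  rw [this] at h2
  exact hP.ne_top ((Ideal.eq_top_iff_one P).mpr h2)

theorem RSzeta_ne_zero (n : ℕ) : RSzeta n ≠ 0 := Complex.exp_ne_zero _

theorem RSzeta_pow_self {n : ℕ} (hn : 0 < n) : RSzeta n ^ n = 1 := by
  rw [RSzeta, ← Complex.exp_nat_mul]
  rw [show ((n : ℂ) * (2 * ↑π * Complex.I / ↑n)) = 2 * ↑π * Complex.I from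
    mul_div_cancel₀ _ (Nat.cast_ne_zero.mpr hn.ne')]
  exact Complex.exp_two_pi_mul_I

theorem RSzeta_pow_mod {n : ℕ} (hn : 0 < n) (k : ℕ) :
    RSzeta n ^ k = RSzeta n ^ (k % n) := by
  conv_lhs => rw [← Nat.div_add_mod k n]
  rw [pow_add, pow_mul, RSzeta_pow_self hn, one_pow, one_mul]

theorem RSzeta_inv_eq {n : ℕ} (hn : 0 < n) : (RSzeta n)⁻¹ = RSzeta n ^ (n - 1) := by
  apply inv_eq_of_mul_eq_one_right
  rw [← pow_succ', Nat.sub_add_cancel hn]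
  exact RSzeta_pow_self hn

theorem RS_int_of_pow_eq_one {x : ℂ} {n : ℕ} (hn : 0 < n) (h : x ^ n = 1) :
    IsIntegral ℤ x := by
  refine ⟨Polynomial.X ^ n - Polynomial.C 1, Polynomial.monic_X_pow_sub_C _ hn.ne', ?_⟩
  simp [h]

theorem RS_not_unit_two (O : Subring ℂ) (hOint : ∀ x : ℂ, x ∈ O → IsIntegral ℤ x) :
    ¬ IsUnit (2 : O) := by
  intro h
  obtain ⟨x, hx⟩ := isUnit_iff_exists_inv.mp h
  have hx' : (2 : ℂ) * (x : ℂ) = 1 := by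
    have := congrArg (fun z : O => (z : ℂ)) hx
    push_cast at this
    exact this
  have hxval : (x : ℂ) = algebraMap ℚ ℂ (1/2) := by
    have h05 : (x : ℂ) = 1/2 := by
      field_simp
      linear_combination hx'
    rw [h05]; simp
  have hint : IsIntegral ℤ ((1:ℚ)/2) := by
    have h1 : IsIntegral ℤ ((x : O) : ℂ) := hOint _ (SetLike.coe_mem _)
    rw [hxval] at h1
    exact (isIntegral_algHom_iff ((algebraMap ℚ ℂ).toIntAlgHom)
      (algebraMap ℚ ℂ).injective).mp h1
  obtain ⟨y, hy⟩ := IsIntegrallyClosed.isIntegral_iff.mp hint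
  have h2q : ((2 * y : ℤ) : ℚ) = ((1 : ℤ) : ℚ) := by
    push_cast
    rw [show ((y:ℚ)) = (1:ℚ)/2 from hy ▸ by norm_num]
    ring
  have := Int.cast_injective (α := ℚ) h2q
  omega

theorem RS_unit_lemma {O : Subring ℂ} {P : Ideal O} (hmax : P.IsMaximal)
    (h2P : (2 : O) ∈ P) {n : ℕ} (hn : Odd n) (hn0 : 0 < n) (hnO : RSzeta n ∈ O)
    (k : ℕ) (hk : ¬ n ∣ k) : RSMemU O P (RSzeta n ^ k - 1) := by
  classical
  have hmem : RSzeta n ^ k - 1 ∈ O := sub_mem (pow_mem hnO _) (one_mem _)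
  refine ⟨hmem, fun hI => ?_⟩
  obtain ⟨hmem', hP⟩ := hI
  have hprim : IsPrimitiveRoot (RSzeta n) n := Complex.isPrimitiveRoot_exp n hn0.ne'
  have hprod : ∏ j ∈ Finset.range (n - 1), (1 - RSzeta n ^ (j + 1)) = (n : ℂ) := by
    obtain ⟨m, rfl⟩ : ∃ m, n = m + 1 := ⟨n - 1, (Nat.succ_pred_eq_of_pos hn0).symm⟩
    simpa using hprim.prod_one_sub_pow_eq_order
  set F : ℕ → O := fun j => ⟨1 - RSzeta n ^ (j + 1),
    sub_mem (one_mem _) (pow_mem hnO _)⟩ with hF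
  have hFprod : (∏ j ∈ Finset.range (n - 1), F j) = ((n : ℕ) : O) := by
    apply Subtype.coe_injective
    push_cast
    rw [← hprod]
  set r : ℕ := k % n with hr
  have hr0 : 0 < r := Nat.pos_of_ne_zero (fun h => hk (Nat.dvd_of_mod_eq_zero h))
  have hrn : r < n := Nat.mod_lt _ hn0
  have hfacP : F (r - 1) ∈ P := by
    have hval : (F (r - 1) : ℂ) = -(RSzeta n ^ k - 1) := by
      show 1 - RSzeta n ^ (r - 1 + 1) = -(RSzeta n ^ k - 1)
      rw [Nat.sub_add_cancel hr0, ← RSzeta_pow_mod hn0]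
      ring
    have : F (r - 1) = -⟨RSzeta n ^ k - 1, hmem'⟩ := Subtype.coe_injective hval
    rw [this]
    exact P.neg_mem hP
  have hmemrange : r - 1 ∈ Finset.range (n - 1) := by
    simp only [Finset.mem_range]
    omega
  obtain ⟨c, hc⟩ := Finset.dvd_prod_of_mem F hmemrange
  have hnP : ((n : ℕ) : O) ∈ P := by
    rw [← hFprod, hc]
    exact P.mul_mem_right _ hfacP
  have hcop : IsCoprime (2 : O) ((n : ℕ) : O) := by
    have h : Nat.Coprime 2 n := (Nat.coprime_two_left).mpr hn
    exact_mod_cast h.cast (R := O)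
  obtain ⟨a, b, hab⟩ := hcop
  have h1P : (1 : O) ∈ P := by
    rw [← hab]
    exact P.add_mem (P.mul_mem_left a h2P) (P.mul_mem_left b hnP)
  exact hmax.ne_top (Ideal.eq_top_iff_one P |>.mpr h1P)

theorem RS_exists_good_ideal (p q : ℕ) (hp : Odd p) (hq : Odd q) (hp0 : 0 < p) (hq0 : 0 < q) :
    ∃ (O : Subring ℂ) (P : Ideal O), P.IsPrime ∧
      Complex.I ∈ O ∧ RSzeta p ∈ O ∧ (RSzeta p)⁻¹ ∈ O ∧ RSzeta q ∈ O ∧ (RSzeta q)⁻¹ ∈ O ∧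
      RSMemI O P 2 ∧
      (∀ k : ℕ, ¬ p ∣ k → RSMemU O P (RSzeta p ^ k - 1)) ∧
      (∀ k : ℕ, ¬ q ∣ k → RSMemU O P (RSzeta q ^ k - 1)) := by
  classical
  set O : Subring ℂ := Subring.closure {Complex.I, RSzeta p, RSzeta q} with hO
  have hIO : Complex.I ∈ O := Subring.subset_closure (by simp)
  have hpO : RSzeta p ∈ O := Subring.subset_closure (by simp)
  have hqO : RSzeta q ∈ O := Subring.subset_closure (by simp)
  have hpinvO : (RSzeta p)⁻¹ ∈ O := by rw [RSzeta_inv_eq hp0]; exact pow_mem hpO _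
  have hqinvO : (RSzeta q)⁻¹ ∈ O := by rw [RSzeta_inv_eq hq0]; exact pow_mem hqO _
  have hOint : ∀ x : ℂ, x ∈ O → IsIntegral ℤ x := by
    intro x hx
    have hsub : O ≤ (integralClosure ℤ ℂ).toSubring := by
      rw [hO]
      apply Subring.closure_le.mpr
      intro y hy
      simp only [Set.mem_insert_iff, Set.mem_singleton_iff] at hy
      rcases hy with rfl | rfl | rfl
      · exact RS_int_of_pow_eq_one (by norm_num) Complex.I_pow_four
      · exact RS_int_of_pow_eq_one hp0 (RSzeta_pow_self hp0)
      · exact RS_int_of_pow_eq_one hq0 (RSzeta_pow_self hq0)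
    exact hsub hx
  have h2 : ¬ IsUnit (2 : O) := RS_not_unit_two O hOint
  have hne : Ideal.span {(2 : O)} ≠ ⊤ := by
    rw [Ne, Ideal.span_singleton_eq_top]
    exact h2
  obtain ⟨P, hmax, hle⟩ := Ideal.exists_le_maximal _ hne
  have h2P : (2 : O) ∈ P := hle (Ideal.subset_span rfl)
  have h2O : (2 : ℂ) ∈ O := by
    have := SetLike.coe_mem (2 : O)
    rwa [show ((2 : O) : ℂ) = 2 by push_cast; rfl] at this
  have h2I : RSMemI O P 2 := by
    refine ⟨h2O, ?_⟩
    have : (⟨(2 : ℂ), h2O⟩ : O) = (2 : O) := by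
      apply Subtype.coe_injective; rfl
    rw [this]; exact h2P
  exact ⟨O, P, hmax.isPrime, hIO, hpO, hpinvO, hqO, hqinvO, h2I,
    fun k hk => RS_unit_lemma hmax h2P hp hp0 hpO k hk,
    fun k hk => RS_unit_lemma hmax h2P hq hq0 hqO k hk⟩

/-! ### Matrices and the action of `SO3` on `ℂ³` -/

namespace RS

def mat (x : SO3) : Matrix (Fin 3) (Fin 3) ℝ :=
  ((x : Matrix.orthogonalGroup (Fin 3) ℝ) : Matrix (Fin 3) (Fin 3) ℝ)

theorem mat_mul (x y : SO3) : mat (x * y) = mat x * mat y := rfl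

theorem mat_one : mat 1 = 1 := rfl

noncomputable instance so3Action : MulAction SO3 (Fin 3 → ℂ) where
  smul g v := ((mat g).map (Complex.ofReal)).mulVec v
  one_smul v := by
    show ((mat 1).map (Complex.ofReal)).mulVec v = v
    rw [mat_one]
    rw [show (1 : Matrix (Fin 3) (Fin 3) ℝ).map (Complex.ofReal) =
      (1 : Matrix (Fin 3) (Fin 3) ℂ) from Matrix.map_one _ (by simp) (by simp)]
    simp
  mul_smul g h v := by
    show ((mat (g * h)).map (Complex.ofReal)).mulVec v = _
    rw [mat_mul]
    rw [show (mat g * mat h).map (Complex.ofReal) =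
      (mat g).map Complex.ofReal * (mat h).map Complex.ofReal from
      Matrix.map_mul (f := Complex.ofRealHom)]
    rw [← Matrix.mulVec_mulVec]
    rfl

theorem smul_def (g : SO3) (v : Fin 3 → ℂ) :
    g • v = ((mat g).map (Complex.ofReal)).mulVec v := rfl

theorem smul_apply (g : SO3) (v : Fin 3 → ℂ) (i : Fin 3) :
    (g • v) i = (mat g i 0 : ℂ) * v 0 + (mat g i 1 : ℂ) * v 1 + (mat g i 2 : ℂ) * v 2 := by
  rw [smul_def]
  simp [Matrix.mulVec, dotProduct, Fin.sum_univ_three, Matrix.map_apply]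

theorem mat_pow_x (R : SO3) (θ : ℝ)
    (hR : mat R = !![1, 0, 0; 0, Real.cos θ, -Real.sin θ; 0, Real.sin θ, Real.cos θ]) (n : ℕ) :
    mat (R ^ n) = !![1, 0, 0;
      0, Real.cos (n * θ), -Real.sin (n * θ);
      0, Real.sin (n * θ), Real.cos (n * θ)] := by
  induction n with
  | zero => simp [mat_one, Matrix.one_fin_three]
  | succ n ih =>
    rw [pow_succ, mat_mul, ih, hR, Matrix.mul_fin_three]
    have h1 : ((n + 1 : ℕ) : ℝ) * θ = n * θ + θ := by push_cast; ring
    rw [h1, Real.cos_add, Real.sin_add]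
    congr 1 <;> ring

theorem mat_pow_z (R : SO3) (θ : ℝ)
    (hR : mat R = !![Real.cos θ, -Real.sin θ, 0; Real.sin θ, Real.cos θ, 0; 0, 0, 1]) (n : ℕ) :
    mat (R ^ n) = !![Real.cos (n * θ), -Real.sin (n * θ), 0;
      Real.sin (n * θ), Real.cos (n * θ), 0;
      0, 0, 1] := by
  induction n with
  | zero => simp [mat_one, Matrix.one_fin_three]
  | succ n ih =>
    rw [pow_succ, mat_mul, ih, hR, Matrix.mul_fin_three]
    have h1 : ((n + 1 : ℕ) : ℝ) * θ = n * θ + θ := by push_cast; ring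
    rw [h1, Real.cos_add, Real.sin_add]
    congr 1 <;> ring

theorem smul_coords_x (g : SO3) (c s : ℝ)
    (hg : mat g = !![1, 0, 0; 0, c, -s; 0, s, c]) (v : Fin 3 → ℂ) :
    (g • v) 0 = v 0 ∧ (g • v) 1 = (c : ℂ) * v 1 - (s : ℂ) * v 2 ∧
      (g • v) 2 = (s : ℂ) * v 1 + (c : ℂ) * v 2 := by
  refine ⟨?_, ?_, ?_⟩ <;> rw [smul_apply, hg] <;>
    · simp only [Matrix.cons_val_zero, Matrix.cons_val_one, Matrix.head_cons,
        Matrix.cons_val_two, Matrix.tail_cons, Matrix.of_apply, Matrix.cons_val',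
        Matrix.empty_val', Matrix.cons_val_fin_one, Matrix.head_fin_const]
      push_cast
      ring

theorem smul_coords_z (g : SO3) (c s : ℝ)
    (hg : mat g = !![c, -s, 0; s, c, 0; 0, 0, 1]) (v : Fin 3 → ℂ) :
    (g • v) 0 = (c : ℂ) * v 0 - (s : ℂ) * v 1 ∧ (g • v) 1 = (s : ℂ) * v 0 + (c : ℂ) * v 1 ∧
      (g • v) 2 = v 2 := by
  refine ⟨?_, ?_, ?_⟩ <;> rw [smul_apply, hg] <;>
    · simp only [Matrix.cons_val_zero, Matrix.cons_val_one, Matrix.head_cons,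
        Matrix.cons_val_two, Matrix.tail_cons, Matrix.of_apply, Matrix.cons_val',
        Matrix.empty_val', Matrix.cons_val_fin_one, Matrix.head_fin_const]
      push_cast
      ring

end RS

/-! ### relation between `cos`/`sin` and roots of unity -/

theorem RS_exp (n : ℕ) (k : ℕ) :
    RSzeta n ^ k = Complex.exp (((k * (2 * π / n) : ℝ) : ℂ) * Complex.I) := by
  rw [RSzeta, ← Complex.exp_nat_mul]
  congr 1
  push_cast
  ring

theorem RS_exp_inv (n : ℕ) (k : ℕ) :
    (RSzeta n ^ k)⁻¹ = Complex.exp (((-(k * (2 * π / n)) : ℝ) : ℂ) * Complex.I) := by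
  rw [RS_exp, ← Complex.exp_neg]
  congr 1
  push_cast
  ring

theorem RS_two_cos (n : ℕ) (k : ℕ) :
    ((Real.cos (k * (2 * π / n)) : ℝ) : ℂ) * 2 = RSzeta n ^ k + (RSzeta n ^ k)⁻¹ := by
  rw [RS_exp_inv, RS_exp, Complex.exp_mul_I, Complex.exp_mul_I, Complex.ofReal_neg,
    Complex.cos_neg, Complex.sin_neg, Complex.ofReal_cos]
  ring

theorem RS_two_sin (n : ℕ) (k : ℕ) :
    ((Real.sin (k * (2 * π / n)) : ℝ) : ℂ) * 2 =
      (-Complex.I) * (RSzeta n ^ k - (RSzeta n ^ k)⁻¹) := by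
  rw [RS_exp_inv, RS_exp, Complex.exp_mul_I, Complex.exp_mul_I, Complex.ofReal_neg,
    Complex.cos_neg, Complex.sin_neg, Complex.ofReal_sin]
  linear_combination (2 : ℂ) * Complex.sin ((k * (2 * π / n) : ℝ) : ℂ) * Complex.I_sq

/-! ### the ping-pong sets -/

def RSsetA (O : Subring ℂ) (P : Ideal O) : Set (Fin 3 → ℂ) :=
  {v | ∃ m : ℕ, RSMemI O P ((2 : ℂ) ^ m * v 0) ∧ RSMemU O P ((2 : ℂ) ^ m * v 1) ∧
    ((2 : ℂ) ^ m * v 2) ∈ O}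

def RSsetB (O : Subring ℂ) (P : Ideal O) : Set (Fin 3 → ℂ) :=
  {v | ∃ m : ℕ, RSMemU O P ((2 : ℂ) ^ m * v 0) ∧ RSMemU O P ((2 : ℂ) ^ m * v 1) ∧
    RSMemI O P ((2 : ℂ) ^ m * v 2)}

section
variable {O : Subring ℂ} {P : Ideal O}

theorem RS_level_aux (h2 : RSMemI O P 2) {c : ℂ} {m j : ℕ} (h : (2 : ℂ) ^ m * c ∈ O) :
    RSMemI O P ((2 : ℂ) ^ (j + m + 1) * c) := by
  have hx : ((2 : ℂ) ^ j * ((2 : ℂ) ^ m * c)) ∈ O := mul_mem (pow_mem h2.memO _) h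
  have h3 := h2.mul_right _ hx
  rwa [show (2 : ℂ) * ((2 : ℂ) ^ j * ((2 : ℂ) ^ m * c)) = (2 : ℂ) ^ (j + m + 1) * c from by
    ring] at h3

theorem RS_level (h2 : RSMemI O P 2) {c : ℂ} {m m' : ℕ}
    (h : RSMemU O P ((2 : ℂ) ^ m * c)) (h' : RSMemU O P ((2 : ℂ) ^ m' * c)) : m = m' := by
  rcases lt_trichotomy m m' with h1 | h1 | h1
  · exfalso
    obtain ⟨j, rfl⟩ : ∃ j, m' = j + m + 1 := ⟨m' - m - 1, by omega⟩
    exact h'.not_memI (RS_level_aux h2 h.memO)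
  · exact h1
  · exfalso
    obtain ⟨j, rfl⟩ : ∃ j, m = j + m' + 1 := ⟨m - m' - 1, by omega⟩
    exact h.not_memI (RS_level_aux h2 h'.memO)

theorem RS_disjoint (h2 : RSMemI O P 2) : Disjoint (RSsetA O P) (RSsetB O P) := by
  rw [Set.disjoint_left]
  rintro v ⟨m, ha0, ha1, _⟩ ⟨m', hb0, hb1, _⟩
  obtain rfl : m = m' := RS_level h2 ha1 hb1
  exact hb0.not_memI ha0

theorem RS_A_mem (hP : P.IsPrime) : ![0, 1, 0] ∈ RSsetA O P := by
  refine ⟨0, ?_, ?_, ?_⟩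
  · rw [show ((2:ℂ)^0 * (![0, 1, 0] : Fin 3 → ℂ) 0) = 0 by simp]
    exact RSMemI_zero
  · rw [show ((2:ℂ)^0 * (![0, 1, 0] : Fin 3 → ℂ) 1) = 1 by simp]
    exact RSMemU_one hP
  · rw [show ((2:ℂ)^0 * (![0, 1, 0] : Fin 3 → ℂ) 2) = 0 by simp]
    exact zero_mem _

theorem RS_B_mem (hP : P.IsPrime) : ![1, 1, 0] ∈ RSsetB O P := by
  refine ⟨0, ?_, ?_, ?_⟩
  · rw [show ((2:ℂ)^0 * (![1, 1, 0] : Fin 3 → ℂ) 0) = 1 by simp]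
    exact RSMemU_one hP
  · rw [show ((2:ℂ)^0 * (![1, 1, 0] : Fin 3 → ℂ) 1) = 1 by simp]
    exact RSMemU_one hP
  · rw [show ((2:ℂ)^0 * (![1, 1, 0] : Fin 3 → ℂ) 2) = 0 by simp]
    exact RSMemI_zero

theorem RS_stepX (hP : P.IsPrime) (h2 : RSMemI O P 2) (g : SO3) (c s : ℝ)
    (hg : RS.mat g = !![1, 0, 0; 0, c, -s; 0, s, c]) {C S : ℂ}
    (hC : ((c : ℝ) : ℂ) * 2 = C) (hS : ((s : ℝ) : ℂ) * 2 = S)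
    (hCU : RSMemU O P C) (hSU : RSMemU O P S)
    {v : Fin 3 → ℂ} (hv : v ∈ RSsetB O P) : g • v ∈ RSsetA O P := by
  obtain ⟨m, h0, h1, h2v⟩ := hv
  obtain ⟨e0, e1, e2⟩ := RS.smul_coords_x g c s hg v
  refine ⟨m + 1, ?_, ?_, ?_⟩
  · rw [e0, show (2:ℂ)^(m+1) * v 0 = 2 * ((2:ℂ)^m * v 0) from by ring]
    exact h2.mul_right _ h0.memO
  · rw [e1, show (2:ℂ)^(m+1) * ((c:ℂ) * v 1 - (s:ℂ) * v 2)
        = C * ((2:ℂ)^m * v 1) - S * ((2:ℂ)^m * v 2) from by rw [← hC, ← hS]; ring]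
    exact (hCU.mul hP h1).sub_memI (h2v.mul_left S hSU.memO)
  · rw [e2, show (2:ℂ)^(m+1) * ((s:ℂ) * v 1 + (c:ℂ) * v 2)
        = S * ((2:ℂ)^m * v 1) + C * ((2:ℂ)^m * v 2) from by rw [← hC, ← hS]; ring]
    exact add_mem (mul_mem hSU.memO h1.memO) (mul_mem hCU.memO h2v.memO)

theorem RS_stepZ (hP : P.IsPrime) (h2 : RSMemI O P 2) (g : SO3) (c s : ℝ)
    (hg : RS.mat g = !![c, -s, 0; s, c, 0; 0, 0, 1]) {C S : ℂ}
    (hC : ((c : ℝ) : ℂ) * 2 = C) (hS : ((s : ℝ) : ℂ) * 2 = S)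
    (hCU : RSMemU O P C) (hSU : RSMemU O P S)
    {v : Fin 3 → ℂ} (hv : v ∈ RSsetA O P) : g • v ∈ RSsetB O P := by
  obtain ⟨m, h0, h1, h2v⟩ := hv
  obtain ⟨e0, e1, e2⟩ := RS.smul_coords_z g c s hg v
  refine ⟨m + 1, ?_, ?_, ?_⟩
  · rw [e0, show (2:ℂ)^(m+1) * ((c:ℂ) * v 0 - (s:ℂ) * v 1)
        = -(S * ((2:ℂ)^m * v 1) - C * ((2:ℂ)^m * v 0)) from by rw [← hC, ← hS]; ring]
    exact ((hSU.mul hP h1).sub_memI (h0.mul_left C hCU.memO)).neg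
  · rw [e1, show (2:ℂ)^(m+1) * ((s:ℂ) * v 0 + (c:ℂ) * v 1)
        = C * ((2:ℂ)^m * v 1) + S * ((2:ℂ)^m * v 0) from by rw [← hC, ← hS]; ring]
    exact (hCU.mul hP h1).add_memI (h0.mul_left S hSU.memO)
  · rw [e2, show (2:ℂ)^(m+1) * v 2 = 2 * ((2:ℂ)^m * v 2) from by ring]
    exact h2.mul_right _ h2v

theorem RS_CS_unit (hP : P.IsPrime)
    (h2 : RSMemI O P 2) {n : ℕ} (hn : Odd n) (hn0 : 0 < n)
    (hζ : RSzeta n ∈ O) (hζinv : (RSzeta n)⁻¹ ∈ O) (hIO : Complex.I ∈ O)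
    (hU : ∀ k : ℕ, ¬ n ∣ k → RSMemU O P (RSzeta n ^ k - 1))
    {k : ℕ} (hk0 : 0 < k) (hkn : k < n) :
    RSMemU O P (RSzeta n ^ k + (RSzeta n ^ k)⁻¹) ∧
    RSMemU O P (-Complex.I * (RSzeta n ^ k - (RSzeta n ^ k)⁻¹)) := by
  have hnd : ¬ n ∣ 2 * k := by
    intro hdvd
    have hcop : Nat.Coprime n 2 := (Nat.coprime_two_right).mpr hn
    have hk := Nat.Coprime.dvd_of_dvd_mul_left hcop hdvd
    have := Nat.le_of_dvd hk0 hk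
    omega
  have hU2k := hU (2 * k) hnd
  have hζkO : RSzeta n ^ k ∈ O := pow_mem hζ _
  have hζkinvO : (RSzeta n ^ k)⁻¹ ∈ O := by rw [← inv_pow]; exact pow_mem hζinv _
  have hmulinv : RSzeta n ^ k * (RSzeta n ^ k)⁻¹ = 1 :=
    mul_inv_cancel₀ (pow_ne_zero _ (RSzeta_ne_zero n))
  constructor
  · refine ⟨add_mem hζkO hζkinvO, fun hI => ?_⟩
    have h1 : RSMemI O P (RSzeta n ^ k * (RSzeta n ^ k + (RSzeta n ^ k)⁻¹)) :=
      hI.mul_left _ hζkO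
    have heq : RSzeta n ^ k * (RSzeta n ^ k + (RSzeta n ^ k)⁻¹)
        = (RSzeta n ^ (2 * k) - 1) + 2 := by
      rw [two_mul, pow_add]
      linear_combination hmulinv
    rw [heq] at h1
    exact (hU2k.add_memI h2).not_memI h1
  · refine ⟨mul_mem (neg_mem hIO) (sub_mem hζkO hζkinvO), fun hI => ?_⟩
    have h1 : RSMemI O P ((Complex.I * RSzeta n ^ k)
        * (-Complex.I * (RSzeta n ^ k - (RSzeta n ^ k)⁻¹))) :=
      hI.mul_left _ (mul_mem hIO hζkO)
    have heq : (Complex.I * RSzeta n ^ k) * (-Complex.I * (RSzeta n ^ k - (RSzeta n ^ k)⁻¹))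
        = RSzeta n ^ (2 * k) - 1 := by
      rw [two_mul, pow_add]
      linear_combination ((RSzeta n ^ k)⁻¹ * RSzeta n ^ k - RSzeta n ^ k * RSzeta n ^ k)
        * Complex.I_sq - hmulinv
    rw [heq] at h1
    exact hU2k.not_memI h1

end

end RSaux

/-! ### glue between the binary coproduct and the indexed coproduct -/

def RSH (p q : ℕ) : Bool → Type :=
  fun b => cond b (Multiplicative (ZMod p)) (Multiplicative (ZMod q))

instance (p q : ℕ) : ∀ b, Group (RSH p q b)
  | true => inferInstanceAs (Group (Multiplicative (ZMod p)))
  | false => inferInstanceAs (Group (Multiplicative (ZMod q)))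

noncomputable def RSe (p q : ℕ) :
    Monoid.Coprod (Multiplicative (ZMod p)) (Multiplicative (ZMod q)) →*
      Monoid.CoprodI (RSH p q) :=
  Monoid.Coprod.lift (Monoid.CoprodI.of (M := RSH p q) (i := true))
    (Monoid.CoprodI.of (M := RSH p q) (i := false))

noncomputable def RSe' (p q : ℕ) :
    Monoid.CoprodI (RSH p q) →*
      Monoid.Coprod (Multiplicative (ZMod p)) (Multiplicative (ZMod q)) :=
  Monoid.CoprodI.lift (fun b => match b with
    | true => Monoid.Coprod.inl
    | false => Monoid.Coprod.inr)

theorem RSe'_e (p q : ℕ) : (RSe' p q).comp (RSe p q) = MonoidHom.id _ := by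
  apply Monoid.Coprod.hom_ext <;> refine MonoidHom.ext fun x => ?_ <;>
    · simp only [MonoidHom.comp_apply, MonoidHom.id_apply]
      rw [RSe, RSe']
      first
      | exact (congrArg _ (Monoid.Coprod.lift_apply_inl (M := RSH p q true) _ _ x)).trans (Monoid.CoprodI.lift_of (M := RSH p q) (i := true) _ x)
      | exact (congrArg _ (Monoid.Coprod.lift_apply_inr (N := RSH p q false) _ _ x)).trans (Monoid.CoprodI.lift_of (M := RSH p q) (i := false) _ x)

/-! ### the group-theoretic glue and main theorem -/


/-- (Radin–Sadun) For odd positive integers `p` and `q`, the subgroup of `SO(3)` generated by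
the rotation `Rx` by `2π/p` about the `x`-axis and the rotation `Rz` by `2π/q` about the
`z`-axis is isomorphic to the free product `ℤ/p * ℤ/q`: the homomorphism from
`ℤ/p ∗ ℤ/q` sending the generators to `Rx` and `Rz` is injective. -/
theorem radin_sadun_free_product_of_rotations
    (p q : ℕ) (hp : Odd p) (hq : Odd q) (hp0 : 0 < p) (hq0 : 0 < q)
    (Rx Rz : SO3)
    (hRx : ((Rx : Matrix.orthogonalGroup (Fin 3) ℝ) : Matrix (Fin 3) (Fin 3) ℝ) =
      !![1, 0, 0;
         0, cos (2 * π / p), -sin (2 * π / p);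
         0, sin (2 * π / p),  cos (2 * π / p)])
    (hRz : ((Rz : Matrix.orthogonalGroup (Fin 3) ℝ) : Matrix (Fin 3) (Fin 3) ℝ) =
      !![cos (2 * π / q), -sin (2 * π / q), 0;
         sin (2 * π / q),  cos (2 * π / q), 0;
         0, 0, 1])
    (f : Monoid.Coprod (Multiplicative (ZMod p)) (Multiplicative (ZMod q)) →* SO3)
    (hfx : f (Monoid.Coprod.inl (Multiplicative.ofAdd (1 : ZMod p))) = Rx)
    (hfz : f (Monoid.Coprod.inr (Multiplicative.ofAdd (1 : ZMod q))) = Rz) :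
    Function.Injective f := by
  classical
  haveI : NeZero p := ⟨hp0.ne'⟩
  haveI : NeZero q := ⟨hq0.ne'⟩
  by_cases htriv : p = 1 ∧ q = 1
  · -- degenerate case: both groups are trivial
    obtain ⟨rfl, rfl⟩ := htriv
    intro a b _
    have hall : ∀ w : Monoid.Coprod (Multiplicative (ZMod 1)) (Multiplicative (ZMod 1)),
        w = 1 := by
      intro w
      induction w using Monoid.Coprod.induction_on with
      | inl m => rw [Subsingleton.elim m 1, map_one]
      | inr n => rw [Subsingleton.elim n 1, map_one]
      | mul x y hx hy => rw [hx, hy, mul_one]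
    rw [hall a, hall b]
  -- main case
  have h3 : 3 ≤ p ∨ 3 ≤ q := by
    rw [not_and_or] at htriv
    obtain ⟨a, ha⟩ := hp; obtain ⟨b, hb⟩ := hq
    omega
  obtain ⟨O, P, hPprime, hIO, hζpO, hζpinvO, hζqO, hζqinvO, h2I, hUp, hUq⟩ :=
    RS_exists_good_ideal p q hp hq hp0 hq0
  set H := RSH p q with hH
  set e := RSe p q with he_def
  set e' := RSe' p q with he'_def
  have he : e'.comp e = MonoidHom.id _ := RSe'_e p q
  have heinj : Function.Injective e := by
    intro a b hab
    have h1 := congrArg e' hab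
    have h2 := DFunLike.congr_fun he
    simpa [MonoidHom.comp_apply, MonoidHom.id_apply] using (h2 a).symm.trans (h1.trans (h2 b))
  set g : Monoid.CoprodI H →* SO3 := f.comp e' with hg
  let F : ∀ b, H b →* SO3 := fun b => g.comp Monoid.CoprodI.of
  have hgF : Monoid.CoprodI.lift F = g :=
    Monoid.CoprodI.ext_hom _ _ (fun b => Monoid.CoprodI.lift_comp_of F b)
  -- description of the components
  have hFtrue : ∀ h : Multiplicative (ZMod p), F true h = Rx ^ (Multiplicative.toAdd h).val := by
    intro h
    have h1 : F true h = f (Monoid.Coprod.inl h) := by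
      have h0 : F true h = f (e' (Monoid.CoprodI.of (M := RSH p q) (i := true) h)) := rfl
      rw [h0, he'_def, RSe']
      erw [Monoid.CoprodI.lift_of]
    rw [h1]
    have hzm : h = (Multiplicative.ofAdd (1 : ZMod p)) ^ (Multiplicative.toAdd h).val := by
      rw [← ofAdd_nsmul]
      rw [nsmul_eq_mul, mul_one, ZMod.natCast_val, ZMod.cast_id]
      rfl
    conv_lhs => rw [hzm]
    rw [map_pow, map_pow, hfx]
  have hFfalse : ∀ h : Multiplicative (ZMod q), F false h = Rz ^ (Multiplicative.toAdd h).val := by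
    intro h
    have h1 : F false h = f (Monoid.Coprod.inr h) := by
      have h0 : F false h = f (e' (Monoid.CoprodI.of (M := RSH p q) (i := false) h)) := rfl
      rw [h0, he'_def, RSe']
      erw [Monoid.CoprodI.lift_of]
    rw [h1]
    have hzm : h = (Multiplicative.ofAdd (1 : ZMod q)) ^ (Multiplicative.toAdd h).val := by
      rw [← ofAdd_nsmul]
      rw [nsmul_eq_mul, mul_one, ZMod.natCast_val, ZMod.cast_id]
      rfl
    conv_lhs => rw [hzm]
    rw [map_pow, map_pow, hfz]
  -- the ping-pong sets
  let X : Bool → Set (Fin 3 → ℂ) := fun b => cond b (RSsetA O P) (RSsetB O P)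
  have hXne : ∀ b, (X b).Nonempty := by
    intro b
    cases b
    · exact ⟨![1, 1, 0], RS_B_mem hPprime⟩
    · exact ⟨![0, 1, 0], RS_A_mem hPprime⟩
  have hXdisj : Pairwise (Function.onFun Disjoint X) := by
    have hd := RS_disjoint (P := P) h2I
    intro i j hij
    cases i <;> cases j
    · exact absurd rfl hij
    · exact hd.symm
    · exact hd
    · exact absurd rfl hij
  have hpp : Pairwise fun i j => ∀ h : H i, h ≠ 1 → F i h • X j ⊆ X i := by
    intro i j hij
    cases i
    · -- i = false : the q-side, maps A into B
      intro h hne w hw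
      obtain ⟨v, hv, rfl⟩ := hw
      have hj : j = true := by cases j <;> simp_all
      subst hj
      set k : ℕ := (Multiplicative.toAdd h).val with hk
      have hk0 : 0 < k := by
        rcases Nat.eq_zero_or_pos k with h' | h'
        · exfalso; apply hne
          exact (toAdd_eq_zero (α := ZMod q)).mp ((ZMod.val_eq_zero _).mp h')
        · exact h' 
      have hkq : k < q := ZMod.val_lt _
      have hmat := RS.mat_pow_z Rz (2 * π / q) hRz k
      obtain ⟨hCU, hSU⟩ := RS_CS_unit hPprime h2I hq hq0 hζqO hζqinvO hIO hUq hk0 hkq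
      rw [hFfalse h]
      exact RS_stepZ hPprime h2I (Rz ^ k) _ _ hmat (RS_two_cos q k) (RS_two_sin q k)
        hCU hSU hv
    · -- i = true : the p-side, maps B into A
      intro h hne w hw
      obtain ⟨v, hv, rfl⟩ := hw
      have hj : j = false := by cases j <;> simp_all
      subst hj
      set k : ℕ := (Multiplicative.toAdd h).val with hk
      have hk0 : 0 < k := by
        rcases Nat.eq_zero_or_pos k with h' | h'
        · exfalso; apply hne
          exact (toAdd_eq_zero (α := ZMod p)).mp ((ZMod.val_eq_zero _).mp h')
        · exact h' 
      have hkp : k < p := ZMod.val_lt _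
      have hmat := RS.mat_pow_x Rx (2 * π / p) hRx k
      obtain ⟨hCU, hSU⟩ := RS_CS_unit hPprime h2I hp hp0 hζpO hζpinvO hIO hUp hk0 hkp
      rw [hFtrue h]
      exact RS_stepX hPprime h2I (Rx ^ k) _ _ hmat (RS_two_cos p k) (RS_two_sin p k)
        hCU hSU hv
  have hcard : 3 ≤ Cardinal.mk Bool ∨ ∃ b, 3 ≤ Cardinal.mk (H b) := by
    right
    rcases h3 with h3 | h3
    · refine ⟨true, ?_⟩
      show 3 ≤ Cardinal.mk (Multiplicative (ZMod p))
      have hmk : Cardinal.mk (Multiplicative (ZMod p)) = (p : Cardinal) := by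
        rw [Cardinal.mk_congr (Multiplicative.toAdd), Cardinal.mk_fintype, ZMod.card]
      rw [hmk]
      exact_mod_cast h3
    · refine ⟨false, ?_⟩
      show 3 ≤ Cardinal.mk (Multiplicative (ZMod q))
      have hmk : Cardinal.mk (Multiplicative (ZMod q)) = (q : Cardinal) := by
        rw [Cardinal.mk_congr (Multiplicative.toAdd), Cardinal.mk_fintype, ZMod.card]
      rw [hmk]
      exact_mod_cast h3
  have hliftinj := Monoid.CoprodI.lift_injective_of_ping_pong F hcard X hXne hXdisj hpp
  rw [hgF] at hliftinj
  have hfge : g.comp e = f := by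
    rw [hg, MonoidHom.comp_assoc, he, MonoidHom.comp_id]
  rw [← hfge, MonoidHom.coe_comp]
  exact hliftinj.comp heinj
end

section
/- (Levi) Let G and H be groups and let π : G * H → G × H be the canonical homomorphism from the free product to the direct product (restricting to the identity on each factor). Then the kernel G □ H = Ker(π) is a free group, freely generated by the commutators [g,h] = g h g⁻¹ h⁻¹ for g ∈ G \ {1} and h ∈ H \ {1} (where g and h are viewed inside G * H via the canonical inclusions); equivalently, the group homomorphism from the free group on the set (G \ {1}) × (H \ {1}) to G * H sending (g,h) to [g,h] is injective with image exactly Ker(π). -/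
/-- The canonical homomorphism from the free product `G ∗ H` to the direct product `G × H`,
restricting to the identity on each factor. -/
def coprodToProd (G H : Type*) [Group G] [Group H] : Monoid.Coprod G H →* G × H :=
  Monoid.Coprod.lift (MonoidHom.inl G H) (MonoidHom.inr G H)

open scoped commutatorElement

/-- The homomorphism from the free group on the set `(G \ {1}) × (H \ {1})` to the free
product `G ∗ H` sending `(g, h)` to the commutator `[g, h] = g h g⁻¹ h⁻¹`. -/
def commutatorsHom (G H : Type*) [Group G] [Group H] :
    FreeGroup ({g : G // g ≠ 1} × {h : H // h ≠ 1}) →* Monoid.Coprod G H :=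
  FreeGroup.lift fun p => ⁅(Monoid.Coprod.inl (p.1 : G) : Monoid.Coprod G H), (Monoid.Coprod.inr (p.2 : H) : Monoid.Coprod G H)⁆

namespace LeviAux

variable (G H : Type*) [Group G] [Group H]

abbrev F := FreeGroup ({g : G // g ≠ 1} × {h : H // h ≠ 1})
abbrev X := F G H × G × H

open Classical in
/-- `x a b` is the generator `(a,b)` of the free group, or `1` if `a = 1` or `b = 1`. -/
noncomputable def xgen (a : G) (b : H) : F G H :=
  if ha : a = 1 then 1 else if hb : b = 1 then 1 else FreeGroup.of (⟨a, ha⟩, ⟨b, hb⟩)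

variable {G H}

lemma iota_xgen (a : G) (b : H) :
    commutatorsHom G H (xgen G H a b)
      = ⁅(Monoid.Coprod.inl a : Monoid.Coprod G H), Monoid.Coprod.inr b⁆ := by
  unfold xgen
  classical
  split_ifs with ha hb
  · subst ha; simp
  · subst hb; simp
  · simp [commutatorsHom]

variable (G H)

/-- Right multiplication by `inl g`, transported to `X`. -/
noncomputable def pG (g : G) : X G H → X G H := fun p =>
  (p.1 * xgen G H p.2.1 p.2.2 * (xgen G H (p.2.1 * g) p.2.2)⁻¹, p.2.1 * g, p.2.2)

/-- Right multiplication by `inr h`, transported to `X`. -/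
noncomputable def pH (h : H) : X G H → X G H := fun p => (p.1, p.2.1, p.2.2 * h)

noncomputable def AG : G →* (Function.End (X G H))ᵐᵒᵖ where
  toFun g := MulOpposite.op (pG G H g)
  map_one' := by
    apply congrArg MulOpposite.op
    funext p
    show pG G H 1 p = p
    simp [pG]
  map_mul' g g' := by
    erw [← MulOpposite.op_mul]
    apply congrArg MulOpposite.op
    funext p
    show pG G H (g * g') p = pG G H g' (pG G H g p)
    simp only [pG, Prod.mk.injEq, mul_assoc]
    constructor
    · group
    · constructor <;> rfl

noncomputable def AH : H →* (Function.End (X G H))ᵐᵒᵖ where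
  toFun h := MulOpposite.op (pH G H h)
  map_one' := by
    apply congrArg MulOpposite.op
    funext p
    show pH G H 1 p = p
    simp [pH]
  map_mul' h h' := by
    erw [← MulOpposite.op_mul]
    apply congrArg MulOpposite.op
    funext p
    show pH G H (h * h') p = pH G H h' (pH G H h p)
    simp [pH, mul_assoc]

noncomputable def B : Monoid.Coprod G H →* (Function.End (X G H))ᵐᵒᵖ :=
  Monoid.Coprod.lift (AG G H) (AH G H)

/-- Reassembly map. -/
noncomputable def psi (p : X G H) : Monoid.Coprod G H :=
  commutatorsHom G H p.1 * Monoid.Coprod.inl p.2.1 * Monoid.Coprod.inr p.2.2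

variable {G H}

lemma unop_mul (w w' : Monoid.Coprod G H) (p : X G H) :
    (B G H (w * w')).unop p = (B G H w').unop ((B G H w).unop p) := by
  rw [map_mul]
  rfl

lemma unop_inl (g : G) (p : X G H) : (B G H (Monoid.Coprod.inl g)).unop p = pG G H g p := by
  simp only [B, Monoid.Coprod.lift_apply_inl]
  rfl

lemma unop_inr (h : H) (p : X G H) : (B G H (Monoid.Coprod.inr h)).unop p = pH G H h p := by
  simp only [B, Monoid.Coprod.lift_apply_inr]
  rfl

lemma key1 (w : Monoid.Coprod G H) : ∀ p : X G H, psi G H ((B G H w).unop p) = psi G H p * w := by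
  induction w using Monoid.Coprod.induction_on with
  | inl g =>
    intro p
    rw [unop_inl]
    simp only [psi, pG, map_mul, map_inv, iota_xgen, map_mul]
    obtain ⟨k, a, b⟩ := p
    simp only []
    group
  | inr h =>
    intro p
    rw [unop_inr]
    simp only [psi, pH]
    rw [map_mul (Monoid.Coprod.inr (M := G) (N := H))]
    group
  | mul x y hx hy =>
    intro p
    rw [unop_mul, hy, hx, mul_assoc]

lemma unop_one (p : X G H) : (B G H 1).unop p = p := by
  rw [map_one]; rfl

lemma xgen_one_left (b : H) : xgen G H 1 b = 1 := by
  classical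
  unfold xgen
  simp

lemma xgen_one_right (a : G) : xgen G H a 1 = 1 := by
  classical
  unfold xgen
  split_ifs with h1 h2
  · rfl
  · rfl
  · exact absurd rfl h2

lemma xgen_of (p : {g : G // g ≠ 1} × {h : H // h ≠ 1}) :
    xgen G H (p.1 : G) (p.2 : H) = FreeGroup.of p := by
  classical
  unfold xgen
  split_ifs with h1 h2
  · exact absurd h1 p.1.2
  · exact absurd h2 p.2.2
  · rfl

lemma B_iota_inv (k : F G H) (p : X G H) :
    (B G H (commutatorsHom G H k⁻¹)).unop ((B G H (commutatorsHom G H k)).unop p) = p := by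
  rw [← unop_mul, ← map_mul, mul_inv_cancel, map_one, unop_one]

lemma key2 (k : F G H) :
    ∀ k0 : F G H, (B G H (commutatorsHom G H k)).unop (k0, 1, 1) = (k0 * k, 1, 1) := by
  induction k using FreeGroup.induction_on with
  | C1 => intro k0; rw [map_one, unop_one, mul_one]
  | of x =>
    intro k0
    show (B G H (commutatorsHom G H (FreeGroup.of x))).unop (k0, 1, 1) = (k0 * FreeGroup.of x, 1, 1)
    rw [commutatorsHom, FreeGroup.lift_apply_of, commutatorElement_def,
      ← map_inv (Monoid.Coprod.inl : G →* Monoid.Coprod G H),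
      ← map_inv (Monoid.Coprod.inr : H →* Monoid.Coprod G H),
      unop_mul, unop_mul, unop_mul, unop_inl, unop_inr, unop_inl, unop_inr]
    simp [pG, pH, xgen_one_left, xgen_one_right, xgen_of]
  | inv_of x ih =>
    intro k0
    show (B G H (commutatorsHom G H (FreeGroup.of x)⁻¹)).unop (k0, 1, 1)
        = (k0 * (FreeGroup.of x)⁻¹, 1, 1)
    have h1 : (B G H (commutatorsHom G H (FreeGroup.of x))).unop (k0 * (FreeGroup.of x)⁻¹, 1, 1)
        = (k0 * (FreeGroup.of x)⁻¹ * FreeGroup.of x, 1, 1) := ih (k0 * (FreeGroup.of x)⁻¹)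
    have h2 := B_iota_inv (FreeGroup.of x) ((k0 * (FreeGroup.of x)⁻¹ : F G H), (1:G), (1:H))
    rw [h1] at h2
    rw [inv_mul_cancel_right] at h2
    exact h2
  | mul x y hx hy =>
    intro k0
    rw [map_mul, unop_mul, hx, hy, mul_assoc]

end LeviAux

/-- (Levi) The kernel of the canonical homomorphism `G ∗ H → G × H` is a free group,
freely generated by the commutators `[g, h]` with `g ∈ G \ {1}` and `h ∈ H \ {1}`:
the homomorphism from the free group on `(G \ {1}) × (H \ {1})` sending `(g, h)` to
`[g, h]` is injective with range exactly the kernel. -/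
theorem levi_kernel_of_coprod_to_prod_is_free
    (G H : Type*) [Group G] [Group H] :
    Function.Injective (commutatorsHom G H) ∧
      (commutatorsHom G H).range = (coprodToProd G H).ker := by
  have hcomp : ∀ k, coprodToProd G H (commutatorsHom G H k) = 1 := by
    intro k
    induction k using FreeGroup.induction_on with
    | C1 => simp
    | of x =>
      show coprodToProd G H (commutatorsHom G H (FreeGroup.of x)) = 1
      simp [commutatorsHom, coprodToProd, FreeGroup.lift_apply_of, commutatorElement_def,
        Monoid.Coprod.lift_apply_inl, Monoid.Coprod.lift_apply_inr, Prod.ext_iff]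
    | inv_of x ih => rw [map_inv, map_inv, ih, inv_one]
    | mul x y hx hy => rw [map_mul, map_mul, hx, hy, one_mul]
  constructor
  · intro k k' hkk
    have h1 := LeviAux.key2 (G := G) (H := H) k 1
    have h2 := LeviAux.key2 (G := G) (H := H) k' 1
    rw [hkk, h2] at h1
    simpa using congrArg Prod.fst h1.symm
  · ext w
    simp only [MonoidHom.mem_range, MonoidHom.mem_ker]
    constructor
    · rintro ⟨k, rfl⟩; exact hcomp k
    · intro hw
      have h1 := LeviAux.key1 (G := G) (H := H) w (1, 1, 1)
      have hpsi1 : LeviAux.psi G H (1, 1, 1) = 1 := by simp [LeviAux.psi]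
      rw [hpsi1, one_mul] at h1
      set p := (LeviAux.B G H w).unop (1, 1, 1) with hp
      have hpi : coprodToProd G H (LeviAux.psi G H p) = 1 := by rw [h1]; exact hw
      have hab : p.2.1 = 1 ∧ p.2.2 = 1 := by
        unfold LeviAux.psi at hpi
        rw [map_mul, map_mul, hcomp, one_mul] at hpi
        simp only [coprodToProd, Monoid.Coprod.lift_apply_inl,
          Monoid.Coprod.lift_apply_inr] at hpi
        simpa [Prod.ext_iff] using hpi
      refine ⟨p.1, ?_⟩
      rw [← h1]
      simp [LeviAux.psi, hab.1, hab.2]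
end
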